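/- Given a,b ∈ ℂ and c ∈ ℂ*, the assignments L_i λ v = c^i(∂+aλ+b)v, M_i λ v = Y_i λ v = 0 on M = ℂ[∂]v define a conformal module structure over the loop Schrödinger–Virasoro Lie conformal algebra csv; i.e., the compatibility a λ (b μ v) − b μ (a λ v) = [a λ b] λ+μ v holds for all pairs of basis generators. -/
import Mathlib


open Polynomial

/-- Generators of the loop Schrödinger–Virasoro Lie conformal algebra csv. -/
inductive Gen : Type
  | L : ℤ → Gen
  | M : ℤ → Gen
  | Y : ℤ → Gen
  deriving DecidableEq

/-- The λ-bracket of generators of csv (λ evaluated at `l`, ∂ = `X`). -/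
noncomputable def br (l : ℂ) : Gen → Gen → (Gen →₀ Polynomial ℂ)
  | Gen.L i, Gen.L j => Finsupp.single (Gen.L (i + j)) (X + C (2 * l))
  | Gen.L i, Gen.M j => Finsupp.single (Gen.M (i + j)) (X + C l)
  | Gen.M i, Gen.L j => Finsupp.single (Gen.M (i + j)) (C l)
  | Gen.L i, Gen.Y j => Finsupp.single (Gen.Y (i + j)) (X + C ((3/2) * l))
  | Gen.Y i, Gen.L j => Finsupp.single (Gen.Y (i + j)) (C (1/2) * X + C ((3/2) * l))
  | Gen.Y i, Gen.Y j => Finsupp.single (Gen.M (i + j)) (X + C (2 * l))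
  | _, _ => 0

/-- The rank-one module action on M = ℂ[∂]v:
L_i λ v = c^i(∂+aλ+b)v, M_i λ v = 0, Y_i λ v = 0 (λ evaluated at `l`). -/
noncomputable def act (a b c : ℂ) (l : ℂ) : Gen → Polynomial ℂ
  | Gen.L i => C (c ^ i) * (X + C (a * l + b))
  | _ => 0

/-- For any a,b ∈ ℂ and c ∈ ℂ*, these assignments define a conformal module over
csv: the compatibility g₁ λ (g₂ μ v) − g₂ μ (g₁ λ v) = [g₁ λ g₂]_{λ+μ} v holds for
all pairs of generators (note g λ (q(∂)v) = q(∂+λ)·(g λ v) by sesquilinearity,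
and [p(∂)·h]_{ν} v = p(−ν)·(h ν v)). -/
theorem stmt_16 (a b c : ℂ) (hc : c ≠ 0) :
    ∀ (g₁ g₂ : Gen) (l m : ℂ),
      (act a b c m g₂).comp (X + C l) * act a b c l g₁
        - (act a b c l g₁).comp (X + C m) * act a b c m g₂
        = (br l g₁ g₂).sum fun h p => C (p.eval (-(l + m))) * act a b c (l + m) h := by
  intro g₁ g₂ l m
  cases g₁ <;> cases g₂ <;>
    simp only [br] <;>
    (first
      | rw [Finsupp.sum_zero_index]
      | rw [Finsupp.sum_single_index (by simp)]) <;>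
    simp [act, zpow_add₀ hc, eval_add, eval_mul, map_mul,
      map_ofNat] <;>
    ring
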